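/- Let $\lambda \in (0,1)$, let $\{Z_k\}_{k\ge 1}$ be i.i.d. standard normal random variables, $v_0 > 0$, and $u_n = \lambda^n v_0 + (1-\lambda)\sum_{k=1}^n \lambda^{n-k} Z_k^2$. Then $\lim_{n\to\infty} \mathbb{E}\big[ u_n^{-1} \big] = \int_0^\infty \prod_{k=0}^\infty \big[1 + 2(1-\lambda)\lambda^k t\big]^{-1/2} \, dt$, and this limit is finite. -/

import Mathlib

open MeasureTheory ProbabilityTheory Real Filter Set
open scoped ENNReal NNReal

lemma exp_int {b : ℝ} (hb : 0 < b) : ∫ t in Ioi (0:ℝ), Real.exp (-(b*t)) = b⁻¹ := by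
  simp_rw [neg_mul_eq_neg_mul]
  have := integral_comp_mul_left_Ioi (fun x => Real.exp (-x)) 0 hb
  simp only [mul_zero, integral_exp_neg_Ioi, neg_zero, Real.exp_zero, smul_eq_mul, mul_one] at this
  simpa using this

lemma gauss_exp {a : ℝ} (ha : 0 ≤ a) :
    ∫ x, Real.exp (-(a * x^2)) ∂(gaussianReal 0 1) = (1 + 2*a) ^ (-(1:ℝ)/2) := by
  rw [gaussianReal_of_var_ne_zero 0 one_ne_zero]
  have hmeas : Measurable fun x => (gaussianPDFReal 0 1 x).toNNReal :=
    (measurable_gaussianPDFReal 0 1).real_toNNReal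
  rw [show gaussianPDF 0 1 = fun x => ((gaussianPDFReal 0 1 x).toNNReal : ℝ≥0∞) from rfl,
    integral_withDensity_eq_integral_smul hmeas]
  have hpos : (0:ℝ) < a + 1/2 := by linarith
  have key : ∀ x : ℝ, (gaussianPDFReal 0 1 x).toNNReal • Real.exp (-(a * x^2))
      = (Real.sqrt (2*π))⁻¹ * Real.exp (-(a+1/2) * x^2) := by
    intro x
    rw [NNReal.smul_def, Real.coe_toNNReal _ (gaussianPDFReal_nonneg 0 1 x), gaussianPDFReal]
    push_cast
    rw [smul_eq_mul, mul_one, sub_zero, mul_assoc, ← Real.exp_add]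
    ring_nf
  simp_rw [key]
  rw [integral_const_mul, integral_gaussian]
  rw [← Real.sqrt_inv, ← Real.sqrt_mul (by positivity : (0:ℝ) ≤ (2*π)⁻¹),
    show (2*π)⁻¹ * (π / (a + 1/2)) = (1+2*a)⁻¹ by
      field_simp
      ring,
    Real.sqrt_inv, Real.sqrt_eq_rpow, ← Real.rpow_neg (by linarith : (0:ℝ) ≤ 1 + 2*a), neg_div]


lemma expect_exp {Ω : Type*} [MeasureSpace Ω] (μ : Measure Ω) [IsProbabilityMeasure μ]
    (Z : ℕ → Ω → ℝ) (hmeas : ∀ k, Measurable (Z k))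
    (hindep : iIndepFun Z μ)
    (hdist : ∀ k, μ.map (Z k) = gaussianReal 0 1)
    {l : ℝ} (hl0 : 0 < l) (hl1 : l < 1) {v0 : ℝ} (hv0 : 0 < v0) (n : ℕ) {t : ℝ} (ht : 0 < t) :
    ∫ ω, Real.exp (-((l^n * v0 + (1 - l) * ∑ k ∈ Finset.Icc 1 n, l^(n-k) * (Z k ω)^2) * t)) ∂μ
      = Real.exp (-(l^n*v0*t)) * ∏ j ∈ Finset.range n, (1 + 2*(1-l)*l^j*t) ^ (-(1:ℝ)/2) := by
  set s : ℝ := -(t*(1-l)) with hs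
  set X : ℕ → Ω → ℝ := fun k ω => l^(n-k) * (Z k ω)^2 with hX
  have hXmeas : ∀ k, Measurable (X k) := fun k => ((hmeas k).pow_const 2).const_mul _
  have hXindep : iIndepFun X μ :=
    hindep.comp (fun k => fun x : ℝ => l^(n-k) * x^2)
      (fun k => (measurable_id.pow_const 2).const_mul _)
  have hexp : ∀ ω, Real.exp (-((l^n * v0 + (1 - l) * ∑ k ∈ Finset.Icc 1 n, l^(n-k) * (Z k ω)^2) * t))
      = Real.exp (-(l^n*v0*t)) * Real.exp (s * (∑ k ∈ Finset.Icc 1 n, X k) ω) := by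
    intro ω
    rw [← Real.exp_add]
    congr 1
    rw [Finset.sum_apply]
    simp only [hX]
    ring
  simp_rw [hexp]
  rw [integral_const_mul]
  congr 1
  have hm : ∫ ω, Real.exp (s * (∑ k ∈ Finset.Icc 1 n, X k) ω) ∂μ
      = mgf (∑ k ∈ Finset.Icc 1 n, X k) μ s := rfl
  rw [hm, hXindep.mgf_sum hXmeas]
  have hmgf : ∀ k ∈ Finset.Icc 1 n, mgf (X k) μ s = (1 + 2*(1-l)*l^(n-k)*t) ^ (-(1:ℝ)/2) := by
    intro k hk
    have ha : 0 ≤ t*(1-l)*l^(n-k) := by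
      have : (0:ℝ) ≤ 1 - l := by linarith
      positivity
    have h1 : mgf (X k) μ s = ∫ x, Real.exp (-((t*(1-l)*l^(n-k)) * x^2)) ∂(μ.map (Z k)) := by
      have hg : Measurable fun x : ℝ => Real.exp (-(t*(1-l)*l^(n-k) * x^2)) := by fun_prop
      rw [integral_map (hmeas k).aemeasurable hg.aestronglyMeasurable, mgf]
      refine integral_congr_ae (Filter.Eventually.of_forall fun ω => ?_)
      simp only [hX]
      congr 1
      ring
    rw [h1, hdist k, gauss_exp ha,
      show 1 + 2*(t*(1-l)*l^(n-k)) = 1 + 2*(1-l)*l^(n-k)*t by ring]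
  rw [Finset.prod_congr rfl hmgf]
  refine Finset.prod_nbij' (fun k => n - k) (fun j => n - j) ?_ ?_ ?_ ?_ ?_
  · intro k hk
    simp only [Finset.mem_Icc] at hk
    simp only [Finset.mem_range]
    omega
  · intro j hj
    simp only [Finset.mem_range] at hj
    simp only [Finset.mem_Icc]
    omega
  · intro k hk
    simp only [Finset.mem_Icc] at hk
    show n - (n - k) = k
    omega
  · intro j hj
    simp only [Finset.mem_range] at hj
    show n - (n - j) = j
    omega
  · intro k hk
    rfl


lemma key_eq {Ω : Type*} [MeasureSpace Ω] (μ : Measure Ω) [IsProbabilityMeasure μ]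
    (Z : ℕ → Ω → ℝ) (hmeas : ∀ k, Measurable (Z k))
    (hindep : iIndepFun Z μ)
    (hdist : ∀ k, μ.map (Z k) = gaussianReal 0 1)
    {l : ℝ} (hl0 : 0 < l) (hl1 : l < 1) {v0 : ℝ} (hv0 : 0 < v0) (n : ℕ) :
    ∫ ω, (l^n * v0 + (1 - l) * ∑ k ∈ Finset.Icc 1 n, l^(n-k) * (Z k ω)^2)⁻¹ ∂μ
      = ∫ t in Ioi (0:ℝ),
          Real.exp (-(l^n*v0*t)) * ∏ j ∈ Finset.range n, (1 + 2*(1-l)*l^j*t) ^ (-(1:ℝ)/2) := by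
  set U : Ω → ℝ := fun ω => l^n * v0 + (1 - l) * ∑ k ∈ Finset.Icc 1 n, l^(n-k) * (Z k ω)^2 with hUdef
  set F : ℝ → ℝ := fun t =>
    Real.exp (-(l^n*v0*t)) * ∏ j ∈ Finset.range n, (1 + 2*(1-l)*l^j*t) ^ (-(1:ℝ)/2) with hFdef
  have hl1' : (0:ℝ) ≤ 1 - l := by linarith
  have hU0 : ∀ ω, 0 < U ω := by
    intro ω
    have h1 : 0 ≤ ∑ k ∈ Finset.Icc 1 n, l^(n-k) * (Z k ω)^2 :=
      Finset.sum_nonneg fun k _ => mul_nonneg (pow_nonneg hl0.le _) (sq_nonneg _)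
    have h2 : 0 < l^n * v0 := mul_pos (pow_pos hl0 n) hv0
    simp only [hUdef]
    nlinarith
  have hUmeas : Measurable U := by
    apply Measurable.const_add
    exact (Finset.measurable_sum _ fun k _ => ((hmeas k).pow_const 2).const_mul _).const_mul _
  have hFmeas : Measurable F := by
    apply Measurable.mul
    · fun_prop
    · exact Finset.measurable_prod _ fun j _ => by fun_prop
  have h1 : ∫ ω, (U ω)⁻¹ ∂μ = (∫⁻ ω, ENNReal.ofReal ((U ω)⁻¹) ∂μ).toReal :=
    integral_eq_lintegral_of_nonneg_ae (ae_of_all _ fun ω => (inv_pos.mpr (hU0 ω)).le)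
      hUmeas.inv.aestronglyMeasurable
  have h2 : ∀ ω, ENNReal.ofReal ((U ω)⁻¹)
      = ∫⁻ t in Ioi (0:ℝ), ENNReal.ofReal (Real.exp (-(U ω * t))) := by
    intro ω
    rw [← exp_int (hU0 ω)]
    apply ofReal_integral_eq_lintegral_ofReal
    · have := exp_neg_integrableOn_Ioi 0 (hU0 ω)
      simp only [neg_mul] at this
      exact this
    · exact ae_of_all _ fun t => (Real.exp_pos _).le
  have hswap : ∫⁻ ω, (∫⁻ t in Ioi (0:ℝ), ENNReal.ofReal (Real.exp (-(U ω * t)))) ∂μ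
      = ∫⁻ t in Ioi (0:ℝ), ∫⁻ ω, ENNReal.ofReal (Real.exp (-(U ω * t))) ∂μ := by
    apply lintegral_lintegral_swap
    apply Measurable.aemeasurable
    exact (ENNReal.measurable_ofReal.comp
      (((hUmeas.comp measurable_fst).mul measurable_snd).neg.exp))
  have h4 : ∀ t ∈ Ioi (0:ℝ), ∫⁻ ω, ENNReal.ofReal (Real.exp (-(U ω * t))) ∂μ
      = ENNReal.ofReal (F t) := by
    intro t ht
    rw [← ofReal_integral_eq_lintegral_ofReal]
    · rw [hFdef]
      exact congrArg ENNReal.ofReal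
        (expect_exp μ Z hmeas hindep hdist hl0 hl1 hv0 n ht)
    · refine Integrable.mono' (integrable_const 1)
        ((hUmeas.mul_const t).neg.exp.aestronglyMeasurable) (ae_of_all _ fun ω => ?_)
      rw [Real.norm_eq_abs, abs_of_pos (Real.exp_pos _)]
      exact Real.exp_le_one_iff.mpr (by nlinarith [ (hU0 ω), ht.out ])
    · exact ae_of_all _ fun ω => (Real.exp_pos _).le
  have h5 : (∫⁻ t in Ioi (0:ℝ), ENNReal.ofReal (F t)).toReal = ∫ t in Ioi (0:ℝ), F t := by
    rw [← integral_eq_lintegral_of_nonneg_ae]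
    · refine (ae_restrict_iff' measurableSet_Ioi).mpr (ae_of_all _ fun t ht => ?_)
      have : ∀ j ∈ Finset.range n, (0:ℝ) ≤ (1 + 2*(1-l)*l^j*t) ^ (-(1:ℝ)/2) := by
        intro j _
        apply Real.rpow_nonneg
        have h0 : (0:ℝ) ≤ (1-l) * l^j * t :=
          mul_nonneg (mul_nonneg hl1' (pow_pos hl0 j).le) (le_of_lt ht)
        nlinarith
      exact mul_nonneg (Real.exp_pos _).le (Finset.prod_nonneg this)
    · exact hFmeas.aestronglyMeasurable
  rw [show (fun ω => (l^n * v0 + (1 - l) * ∑ k ∈ Finset.Icc 1 n, l^(n-k) * (Z k ω)^2)⁻¹)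
      = fun ω => (U ω)⁻¹ from rfl] at *
  rw [h1]
  simp_rw [h2]
  rw [hswap, setLIntegral_congr_fun measurableSet_Ioi h4, h5]


lemma fact_pos {l : ℝ} (hl0 : 0 < l) (hl1 : l < 1) {t : ℝ} (ht : 0 < t) (j : ℕ) :
    0 < 1 + 2*(1-l)*l^j*t := by
  have h0 : (0:ℝ) ≤ (1-l) * l^j * t :=
    mul_nonneg (mul_nonneg (by linarith) (pow_pos hl0 j).le) ht.le
  nlinarith

lemma mult {l : ℝ} (hl0 : 0 < l) (hl1 : l < 1) {t : ℝ} (ht : 0 < t) :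
    Multipliable fun j : ℕ => (1 + 2*(1-l)*l^j*t) ^ (-(1:ℝ)/2) := by
  have key : ∀ x : {u : ℝ // 0 < u}, Summable fun j : ℕ =>
      Real.log ((1 + 2*(1-l)*l^j*x.1) ^ (-(1:ℝ)/2)) := by
    intro x
    have hpos := fun j => fact_pos hl0 hl1 x.2 j
    simp_rw [Real.log_rpow (hpos _)]
    apply Summable.mul_left
    have hgeo : Summable fun j : ℕ => 2*(1-l)*x.1 * l^j :=
      (summable_geometric_of_lt_one hl0.le hl1).mul_left _
    refine Summable.of_nonneg_of_le (fun j => Real.log_nonneg ?_) (fun j => ?_) hgeo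
    · have h0 : (0:ℝ) ≤ (1-l) * l^j * x.1 :=
        mul_nonneg (mul_nonneg (by linarith) (pow_pos hl0 j).le) x.2.le
      nlinarith
    · have := Real.log_le_sub_one_of_pos (hpos j)
      nlinarith [this]
  exact Real.multipliable_of_summable_log
    (fun j => Real.rpow_pos_of_pos (fact_pos hl0 hl1 ht j) _) (key ⟨t, ht⟩)

lemma ptwise_lim {l : ℝ} (hl0 : 0 < l) (hl1 : l < 1) {v0 : ℝ} (hv0 : 0 < v0)
    {t : ℝ} (ht : 0 < t) :
    Tendsto (fun n => Real.exp (-(l^n*v0*t))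
        * ∏ j ∈ Finset.range n, (1 + 2*(1-l)*l^j*t) ^ (-(1:ℝ)/2)) atTop
      (nhds (∏' k : ℕ, (1 + 2*(1-l)*l^k*t) ^ (-(1:ℝ)/2))) := by
  have h1 : Tendsto (fun n => Real.exp (-(l^n*v0*t))) atTop (nhds 1) := by
    have hl : Tendsto (fun n => l^n) atTop (nhds 0) :=
      tendsto_pow_atTop_nhds_zero_of_lt_one hl0.le hl1
    have : Tendsto (fun n => -(l^n*v0*t)) atTop (nhds 0) := by
      have := (hl.mul_const v0).mul_const t
      simpa using this.neg
    simpa [Function.comp_def] using (Real.continuous_exp.tendsto 0).comp this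
  have h2 := (mult hl0 hl1 ht).hasProd.tendsto_prod_nat
  simpa using h1.mul h2

lemma prod_bound {l : ℝ} (hl0 : 0 < l) (hl1 : l < 1) {t : ℝ} (ht : 0 < t)
    {n : ℕ} (hn : 3 ≤ n) :
    ∏ j ∈ Finset.range n, (1 + 2*(1-l)*l^j*t) ^ (-(1:ℝ)/2)
      ≤ (1 + 2*(1-l)*l^2*t) ^ (-(3:ℝ)/2) := by
  have hpos := fun j => fact_pos hl0 hl1 ht j
  have hfnonneg : ∀ j : ℕ, (0:ℝ) ≤ (1 + 2*(1-l)*l^j*t) ^ (-(1:ℝ)/2) :=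
    fun j => (Real.rpow_pos_of_pos (hpos j) _).le
  have hsplit : (∏ j ∈ Finset.range 3, (1 + 2*(1-l)*l^j*t) ^ (-(1:ℝ)/2))
      * ∏ j ∈ Finset.Ico 3 n, (1 + 2*(1-l)*l^j*t) ^ (-(1:ℝ)/2)
      = ∏ j ∈ Finset.range n, (1 + 2*(1-l)*l^j*t) ^ (-(1:ℝ)/2) :=
    Finset.prod_range_mul_prod_Ico _ hn
  have htail : ∏ j ∈ Finset.Ico 3 n, (1 + 2*(1-l)*l^j*t) ^ (-(1:ℝ)/2) ≤ 1 := by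
    apply Finset.prod_le_one (fun j _ => hfnonneg j)
    intro j _
    apply Real.rpow_le_one_of_one_le_of_nonpos
    · have h0 : (0:ℝ) ≤ 2*(1-l)*l^j*t :=
        mul_nonneg (mul_nonneg (mul_nonneg (by norm_num) (by linarith)) (pow_pos hl0 j).le) ht.le
      linarith
    · norm_num
  have hhead : ∏ j ∈ Finset.range 3, (1 + 2*(1-l)*l^j*t) ^ (-(1:ℝ)/2)
      ≤ (1 + 2*(1-l)*l^2*t) ^ (-(3:ℝ)/2) := by
    have hstep : ∀ j ∈ Finset.range 3, (1 + 2*(1-l)*l^j*t) ^ (-(1:ℝ)/2)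
        ≤ (1 + 2*(1-l)*l^2*t) ^ (-(1:ℝ)/2) := by
      intro j hj
      simp only [Finset.mem_range] at hj
      apply Real.rpow_le_rpow_of_nonpos (hpos 2)
      · have hll : l^2 ≤ l^j := pow_le_pow_of_le_one hl0.le hl1.le (by omega)
        have : (0:ℝ) ≤ 2*(1-l)*t := by nlinarith
        nlinarith
      · norm_num
    calc ∏ j ∈ Finset.range 3, (1 + 2*(1-l)*l^j*t) ^ (-(1:ℝ)/2)
        ≤ ∏ j ∈ Finset.range 3, (1 + 2*(1-l)*l^2*t) ^ (-(1:ℝ)/2) :=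
          Finset.prod_le_prod (fun j _ => hfnonneg j) hstep
      _ = ((1 + 2*(1-l)*l^2*t) ^ (-(1:ℝ)/2))^(3:ℕ) := by
          rw [Finset.prod_const, Finset.card_range]
      _ = (1 + 2*(1-l)*l^2*t) ^ (-(3:ℝ)/2) := by
          rw [← Real.rpow_natCast ((1 + 2*(1-l)*l^2*t) ^ (-(1:ℝ)/2)) 3,
            ← Real.rpow_mul (hpos 2).le]
          norm_num
  calc ∏ j ∈ Finset.range n, (1 + 2*(1-l)*l^j*t) ^ (-(1:ℝ)/2)
      = _ * _ := hsplit.symm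
    _ ≤ (∏ j ∈ Finset.range 3, (1 + 2*(1-l)*l^j*t) ^ (-(1:ℝ)/2)) * 1 := by
        apply mul_le_mul_of_nonneg_left htail (Finset.prod_nonneg fun j _ => hfnonneg j)
    _ ≤ (1 + 2*(1-l)*l^2*t) ^ (-(3:ℝ)/2) := by rw [mul_one]; exact hhead

lemma G_integrable {l : ℝ} (hl0 : 0 < l) (hl1 : l < 1) :
    IntegrableOn (fun t : ℝ => (1 + 2*(1-l)*l^2*t) ^ (-(3:ℝ)/2)) (Ioi (0:ℝ)) := by
  set b : ℝ := 2*(1-l)*l^2 with hb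
  have hbpos : 0 < b := by
    have : (0:ℝ) < 1 - l := by linarith
    positivity
  have hGmeas : Measurable fun t : ℝ => (1 + b*t) ^ (-(3:ℝ)/2) := by fun_prop
  have hpos : ∀ t : ℝ, 0 < t → (0:ℝ) < 1 + b*t := by
    intro t ht; nlinarith
  have h1 : IntegrableOn (fun t : ℝ => (1 + b*t) ^ (-(3:ℝ)/2)) (Ioc (0:ℝ) 1) := by
    refine Integrable.mono' (integrable_const 1) hGmeas.aestronglyMeasurable ?_
    refine (ae_restrict_iff' measurableSet_Ioc).mpr (ae_of_all _ fun t ht => ?_)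
    rw [Real.norm_eq_abs, abs_of_pos (Real.rpow_pos_of_pos (hpos t ht.1) _)]
    apply Real.rpow_le_one_of_one_le_of_nonpos
    · nlinarith [ht.1, hbpos]
    · norm_num
  have h2 : IntegrableOn (fun t : ℝ => (1 + b*t) ^ (-(3:ℝ)/2)) (Ioi (1:ℝ)) := by
    have hint : IntegrableOn (fun t : ℝ => b ^ (-(3:ℝ)/2) * t ^ (-(3:ℝ)/2)) (Ioi (1:ℝ)) :=
      (integrableOn_Ioi_rpow_of_lt (by norm_num) one_pos).const_mul _
    refine Integrable.mono' hint hGmeas.aestronglyMeasurable ?_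
    refine (ae_restrict_iff' measurableSet_Ioi).mpr (ae_of_all _ fun t ht => ?_)
    have ht1 : (1:ℝ) < t := ht
    have htpos : (0:ℝ) < t := by linarith
    rw [Real.norm_eq_abs, abs_of_pos (Real.rpow_pos_of_pos (hpos t htpos) _)]
    calc (1 + b*t) ^ (-(3:ℝ)/2) ≤ (b*t) ^ (-(3:ℝ)/2) := by
          apply Real.rpow_le_rpow_of_nonpos (by positivity) (by linarith) (by norm_num)
      _ = b ^ (-(3:ℝ)/2) * t ^ (-(3:ℝ)/2) := Real.mul_rpow hbpos.le htpos.le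
  have := h1.union h2
  rwa [Ioc_union_Ioi_eq_Ioi (by norm_num : (0:ℝ) ≤ 1)] at this

theorem stmt_19 {Ω : Type*} [MeasureSpace Ω] (μ : Measure Ω) [IsProbabilityMeasure μ]
    (Z : ℕ → Ω → ℝ) (hmeas : ∀ k, Measurable (Z k))
    (hindep : iIndepFun Z μ)
    (hdist : ∀ k, μ.map (Z k) = gaussianReal 0 1)
    (l : ℝ) (hl0 : 0 < l) (hl1 : l < 1) (v0 : ℝ) (hv0 : 0 < v0) :
    Filter.Tendsto
      (fun n => ∫ ω, (l^n * v0 + (1 - l) * ∑ k ∈ Finset.Icc 1 n, l^(n-k) * (Z k ω)^2)⁻¹ ∂μ)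
      atTop
      (nhds (∫ t in Set.Ioi (0:ℝ), ∏' k : ℕ, (1 + 2 * (1 - l) * l^k * t) ^ (-(1:ℝ)/2))) ∧
    IntegrableOn (fun t => ∏' k : ℕ, (1 + 2 * (1 - l) * l^k * t) ^ (-(1:ℝ)/2))
      (Set.Ioi (0:ℝ)) := by
  set F : ℕ → ℝ → ℝ := fun n t =>
    Real.exp (-(l^n*v0*t)) * ∏ j ∈ Finset.range n, (1 + 2*(1-l)*l^j*t) ^ (-(1:ℝ)/2) with hFdef
  set P : ℕ → ℝ → ℝ := fun n t =>
    ∏ j ∈ Finset.range n, (1 + 2*(1-l)*l^j*t) ^ (-(1:ℝ)/2) with hPdef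
  set G : ℝ → ℝ := fun t => (1 + 2*(1-l)*l^2*t) ^ (-(3:ℝ)/2) with hGdef
  set T : ℝ → ℝ := fun t => ∏' k : ℕ, (1 + 2*(1-l)*l^k*t) ^ (-(1:ℝ)/2) with hTdef
  have hPmeas : ∀ n, Measurable (P n) := fun n =>
    Finset.measurable_prod _ fun j _ => by fun_prop
  have hFmeas : ∀ n, Measurable (F n) := fun n =>
    ((measurable_id.const_mul _).neg.exp).mul (hPmeas n)
  have hPnonneg : ∀ n, ∀ t : ℝ, 0 < t → 0 ≤ P n t := by
    intro n t ht
    exact Finset.prod_nonneg fun j _ => (Real.rpow_pos_of_pos (fact_pos hl0 hl1 ht j) _).le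
  have hPtend : ∀ t : ℝ, 0 < t → Tendsto (fun n => P n t) atTop (nhds (T t)) :=
    fun t ht => (mult hl0 hl1 ht).hasProd.tendsto_prod_nat
  have hTbound : ∀ t : ℝ, 0 < t → ‖T t‖ ≤ G t := by
    intro t ht
    have hTnonneg : 0 ≤ T t :=
      ge_of_tendsto (hPtend t ht) (Eventually.of_forall fun n => hPnonneg n t ht)
    have hTle : T t ≤ G t :=
      le_of_tendsto (hPtend t ht)
        (eventually_atTop.mpr ⟨3, fun n hn => prod_bound hl0 hl1 ht hn⟩)
    rw [Real.norm_eq_abs, abs_of_nonneg hTnonneg]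
    exact hTle
  have hTmeasAE : AEMeasurable T (volume.restrict (Ioi (0:ℝ))) :=
    aemeasurable_of_tendsto_metrizable_ae' (fun n => (hPmeas n).aemeasurable)
      ((ae_restrict_iff' measurableSet_Ioi).mpr (ae_of_all _ fun t ht => hPtend t ht))
  have hInt2 : IntegrableOn T (Ioi (0:ℝ)) :=
    Integrable.mono' (G_integrable hl0 hl1) hTmeasAE.aestronglyMeasurable
      ((ae_restrict_iff' measurableSet_Ioi).mpr (ae_of_all _ fun t ht => hTbound t ht))
  refine ⟨?_, hInt2⟩
  have hrw : (fun n => ∫ ω, (l^n * v0 + (1 - l) * ∑ k ∈ Finset.Icc 1 n, l^(n-k) * (Z k ω)^2)⁻¹ ∂μ)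
      = fun n => ∫ t in Ioi (0:ℝ), F n t :=
    funext fun n => key_eq μ Z hmeas hindep hdist hl0 hl1 hv0 n
  rw [hrw]
  apply tendsto_integral_filter_of_dominated_convergence G
  · exact Eventually.of_forall fun n => (hFmeas n).aestronglyMeasurable
  · filter_upwards [eventually_ge_atTop 3] with n hn
    refine (ae_restrict_iff' measurableSet_Ioi).mpr (ae_of_all _ fun t ht => ?_)
    have ht' : (0:ℝ) < t := ht
    have hFnonneg : 0 ≤ F n t :=
      mul_nonneg (Real.exp_pos _).le (hPnonneg n t ht')
    rw [Real.norm_eq_abs, abs_of_nonneg hFnonneg]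
    have hexple : Real.exp (-(l^n*v0*t)) ≤ 1 := by
      rw [Real.exp_le_one_iff]
      have : (0:ℝ) ≤ l^n*v0*t := by positivity
      linarith
    calc F n t ≤ P n t := mul_le_of_le_one_left (hPnonneg n t ht') hexple
      _ ≤ G t := prod_bound hl0 hl1 ht' hn
  · exact G_integrable hl0 hl1
  · refine (ae_restrict_iff' measurableSet_Ioi).mpr (ae_of_all _ fun t ht => ?_)
    exact ptwise_lim hl0 hl1 hv0 ht
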